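/- A full transformation α of the chain {1, ..., n} is oriented if and only if every restriction of α to a four-element subset is oriented as a partial transformation. -/

import Mathlib

/-- A sequence `a : Fin t → Fin n` is cyclic if at most one index `i`
satisfies `a i > a (i+1)` (indices mod `t`). -/
def IsCyclicSeq {n t : ℕ} (a : Fin t → Fin n) : Prop :=
  (Finset.univ.filter fun i : Fin t =>
    a ⟨(i.val + 1) % t, Nat.mod_lt _ i.pos⟩ < a i).card ≤ 1

/-- A sequence is anti-cyclic if at most one index `i`
satisfies `a i < a (i+1)` (indices mod `t`). -/
def IsAntiCyclicSeq {n t : ℕ} (a : Fin t → Fin n) : Prop :=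
  (Finset.univ.filter fun i : Fin t =>
    a i < a ⟨(i.val + 1) % t, Nat.mod_lt _ i.pos⟩).card ≤ 1

/-- A sequence is oriented if it is cyclic or anti-cyclic. -/
def IsOrientedSeq {n t : ℕ} (a : Fin t → Fin n) : Prop :=
  IsCyclicSeq a ∨ IsAntiCyclicSeq a

namespace OrientedAux

open Finset

/-- Cyclic successor on `Fin t`. -/
def fsucc {t : ℕ} (i : Fin t) : Fin t := ⟨(i.val + 1) % t, Nat.mod_lt _ i.pos⟩

/-- Cyclic shift by a natural number. -/
def sh {n : ℕ} (x : Fin n) (k : ℕ) : Fin n := ⟨(x.val + k) % n, Nat.mod_lt _ x.pos⟩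

@[simp] lemma sh_val {n} (x : Fin n) (k : ℕ) : (sh x k).val = (x.val + k) % n := rfl

lemma sh_zero {n} (x : Fin n) : sh x 0 = x := by
  apply Fin.ext; simp [Nat.mod_eq_of_lt x.isLt]

lemma sh_sh {n} (x : Fin n) (j k : ℕ) : sh (sh x j) k = sh x (j + k) := by
  apply Fin.ext; simp [Nat.mod_add_mod, Nat.add_assoc]

lemma fsucc_sh {n} (x : Fin n) (k : ℕ) : fsucc (sh x k) = sh x (k + 1) := by
  apply Fin.ext; simp [fsucc, Nat.mod_add_mod, Nat.add_assoc]

lemma sh_fsucc_comm {n} (m i : Fin n) : sh m (fsucc i).val = fsucc (sh m i.val) := by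
  apply Fin.ext
  simp only [sh_val, fsucc, Nat.add_mod_mod, Nat.mod_add_mod, Nat.add_assoc]

lemma mod_two_cases (s n : ℕ) (hn : 0 < n) (h : s < 2 * n) :
    (s % n = s ∧ s < n) ∨ (s % n = s - n ∧ n ≤ s) := by
  rcases lt_or_ge s n with h1 | h1
  · exact Or.inl ⟨Nat.mod_eq_of_lt h1, h1⟩
  · refine Or.inr ⟨?_, h1⟩
    rw [Nat.mod_eq_sub_mod h1, Nat.mod_eq_of_lt (by omega)]

lemma gap_eval {n : ℕ} (x y : Fin n) :
    (y.val + n - x.val) % n = if x.val ≤ y.val then y.val - x.val else y.val + n - x.val := by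
  have hx := x.isLt; have hy := y.isLt
  split_ifs with h
  · rw [Nat.mod_eq_sub_mod (by omega), show y.val + n - x.val - n = y.val - x.val by omega,
      Nat.mod_eq_of_lt (by omega)]
  · exact Nat.mod_eq_of_lt (by omega)

lemma sh_gap {n : ℕ} (x y : Fin n) : sh x ((y.val + n - x.val) % n) = y := by
  have hy := y.isLt
  apply Fin.ext
  simp only [sh_val, Nat.add_mod_mod]
  rw [show x.val + (y.val + n - x.val) = y.val + n by omega, Nat.add_mod_right,
    Nat.mod_eq_of_lt hy]

lemma walk {n : ℕ} (rel : Fin n → Fin n → Prop)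
    (hrel : ∀ {b c d : Fin n}, rel c b → ¬ rel d b → rel c d)
    (hirr : ∀ b : Fin n, ¬ rel b b)
    (a : Fin n → Fin n) :
    ∀ (k : ℕ) (x : Fin n), rel (a (sh x k)) (a x) →
      ∃ j < k, rel (a (sh x (j+1))) (a (sh x j)) := by
  intro k
  induction k with
  | zero => intro x hx; rw [sh_zero] at hx; exact absurd hx (hirr _)
  | succ k ih =>
      intro x hx
      by_cases h1 : rel (a (sh x 1)) (a x)
      · exact ⟨0, Nat.succ_pos _, by rwa [sh_zero]⟩
      · have h2 : rel (a (sh x (k+1))) (a (sh x 1)) := hrel hx h1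
        rw [show k + 1 = 1 + k by omega, ← sh_sh] at h2
        obtain ⟨j, hj, hrelj⟩ := ih (sh x 1) h2
        refine ⟨j + 1, by omega, ?_⟩
        rw [sh_sh, sh_sh] at hrelj
        rwa [show 1 + (j + 1) = j + 1 + 1 from by omega,
          show 1 + j = j + 1 from by omega] at hrelj

lemma arc_ne_arc {n : ℕ} (x1 y1 x2 y2 : Fin n) (t1 t2 : ℕ)
    (h1 : t1 < (y1.val + n - x1.val) % n) (h2 : t2 < (y2.val + n - x2.val) % n)
    (hxy : x1.val < y1.val) (hsep : y1.val ≤ x2.val)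
    (hthird : x2.val < y2.val ∨ y2.val ≤ x1.val) :
    sh x1 t1 ≠ sh x2 t2 := by
  have hn : 0 < n := x1.pos
  have hx1 := x1.isLt; have hy1 := y1.isLt; have hx2 := x2.isLt; have hy2 := y2.isLt
  rw [gap_eval] at h1 h2
  apply Fin.ne_of_val_ne
  simp only [sh_val]
  split_ifs at h1 h2 <;>
    (rcases mod_two_cases (x1.val + t1) n hn (by omega) with ⟨e1, f1⟩ | ⟨e1, f1⟩ <;>
     rcases mod_two_cases (x2.val + t2) n hn (by omega) with ⟨e2, f2⟩ | ⟨e2, f2⟩ <;>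
     omega)

lemma restrict_card_le_one {n : ℕ} (rel : Fin n → Fin n → Prop) [DecidableRel rel]
    (hrel : ∀ {b c d : Fin n}, rel c b → ¬ rel d b → rel c d)
    (hirr : ∀ b : Fin n, ¬ rel b b)
    (a : Fin n → Fin n)
    (h : (univ.filter fun i => rel (a (fsucc i)) (a i)).card ≤ 1)
    (u : Fin 4 → Fin n) (hu : StrictMono u) :
    (univ.filter fun j : Fin 4 => rel (a (u (fsucc j))) (a (u j))).card ≤ 1 := by
  by_contra hcon
  have hcard : 1 < (univ.filter fun j : Fin 4 => rel (a (u (fsucc j))) (a (u j))).card := by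
    omega
  obtain ⟨j1, hj1, j2, hj2, hne⟩ := Finset.one_lt_card.mp hcard
  have hj1' := (mem_filter.mp hj1).2
  have hj2' := (mem_filter.mp hj2).2
  have key : ∀ j : Fin 4, rel (a (u (fsucc j))) (a (u j)) →
      ∃ t, t < ((u (fsucc j)).val + n - (u j).val) % n ∧
        rel (a (fsucc (sh (u j) t))) (a (sh (u j) t)) := by
    intro j hj
    obtain ⟨t, ht, hrelt⟩ := walk rel @hrel hirr a
      (((u (fsucc j)).val + n - (u j).val) % n) (u j) (by rwa [sh_gap])
    exact ⟨t, ht, by rwa [fsucc_sh]⟩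
  obtain ⟨t1, ht1, hr1⟩ := key j1 hj1'
  obtain ⟨t2, ht2, hr2⟩ := key j2 hj2'
  have hmem1 : sh (u j1) t1 ∈ univ.filter fun i => rel (a (fsucc i)) (a i) :=
    mem_filter.mpr ⟨mem_univ _, hr1⟩
  have hmem2 : sh (u j2) t2 ∈ univ.filter fun i => rel (a (fsucc i)) (a i) :=
    mem_filter.mpr ⟨mem_univ _, hr2⟩
  have hne' : sh (u j1) t1 ≠ sh (u j2) t2 := by
    have h01 : (u 0).val < (u 1).val := hu (by decide)
    have h12 : (u 1).val < (u 2).val := hu (by decide)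
    have h23 : (u 2).val < (u 3).val := hu (by decide)
    have e0 : fsucc (0 : Fin 4) = 1 := by decide
    have e1 : fsucc (1 : Fin 4) = 2 := by decide
    have e2 : fsucc (2 : Fin 4) = 3 := by decide
    have e3 : fsucc (3 : Fin 4) = 0 := by decide
    clear hj1 hj2 hj1' hj2' hr1 hr2 h hcon key
    have hj1c : j1 = 0 ∨ j1 = 1 ∨ j1 = 2 ∨ j1 = 3 := by omega
    have hj2c : j2 = 0 ∨ j2 = 1 ∨ j2 = 2 ∨ j2 = 3 := by omega
    rcases hj1c with rfl | rfl | rfl | rfl <;> rcases hj2c with rfl | rfl | rfl | rfl <;>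
      simp only [Fin.isValue, e0, e1, e2, e3] at ht1 ht2 ⊢ <;>
      first
        | exact absurd rfl hne
        | exact arc_ne_arc _ _ _ _ _ _ ht1 ht2 (by omega) (by omega) (by omega)
        | exact (arc_ne_arc _ _ _ _ _ _ ht2 ht1 (by omega) (by omega) (by omega)).symm
  have h2 := Finset.one_lt_card.mpr ⟨_, hmem1, _, hmem2, hne'⟩
  omega

def quad {n : ℕ} (a b c d : Fin n) : Fin 4 → Fin n :=
  fun j => if j.val = 0 then a else if j.val = 1 then b else if j.val = 2 then c else d
@[simp] lemma quad0 {n} (a b c d : Fin n) : quad a b c d 0 = a := rfl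
@[simp] lemma quad1 {n} (a b c d : Fin n) : quad a b c d 1 = b := rfl
@[simp] lemma quad2 {n} (a b c d : Fin n) : quad a b c d 2 = c := rfl
@[simp] lemma quad3 {n} (a b c d : Fin n) : quad a b c d 3 = d := rfl

lemma SM4' {n : ℕ} (u : Fin 4 → Fin n) (h1 : u 0 < u 1) (h2 : u 1 < u 2) (h3 : u 2 < u 3) :
    StrictMono u := by
  intro i j hij
  have c1 : i = 0 ∨ i = 1 ∨ i = 2 ∨ i = 3 := by omega
  have c2 : j = 0 ∨ j = 1 ∨ j = 2 ∨ j = 3 := by omega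
  rcases c1 with rfl | rfl | rfl | rfl <;> rcases c2 with rfl | rfl | rfl | rfl <;>
    first
      | exact absurd hij (by decide)
      | exact h1 | exact h2 | exact h3
      | exact h1.trans h2 | exact h2.trans h3
      | exact (h1.trans h2).trans h3

lemma fsucc4_0 : fsucc (0 : Fin 4) = 1 := by decide
lemma fsucc4_1 : fsucc (1 : Fin 4) = 2 := by decide
lemma fsucc4_2 : fsucc (2 : Fin 4) = 3 := by decide
lemma fsucc4_3 : fsucc (3 : Fin 4) = 0 := by decide
lemma fsucc_add4 : ∀ i c : Fin 4, fsucc i + c = fsucc (i + c) := by decide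

lemma exists_rot_strictMono {n : ℕ} (w : Fin 4 → Fin n) (hw : StrictMono w) (m : Fin n) :
    ∃ c : Fin 4, StrictMono fun j : Fin 4 => sh m (w (j + c)).val := by
  have h01 : (w 0).val < (w 1).val := hw (by decide)
  have h12 : (w 1).val < (w 2).val := hw (by decide)
  have h23 : (w 2).val < (w 3).val := hw (by decide)
  have hn : 0 < n := m.pos
  have hm := m.isLt
  have i0 := (w 0).isLt; have i1 := (w 1).isLt; have i2 := (w 2).isLt; have i3 := (w 3).isLt
  have E0 := mod_two_cases (m.val + (w 0).val) n hn (by omega)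
  have E1 := mod_two_cases (m.val + (w 1).val) n hn (by omega)
  have E2 := mod_two_cases (m.val + (w 2).val) n hn (by omega)
  have E3 := mod_two_cases (m.val + (w 3).val) n hn (by omega)
  by_cases c3 : n ≤ m.val + (w 3).val
  · by_cases c2 : n ≤ m.val + (w 2).val
    · by_cases c1 : n ≤ m.val + (w 1).val
      · by_cases c0 : n ≤ m.val + (w 0).val
        · refine ⟨0, SM4' _ ?_ ?_ ?_⟩ <;>
            (simp only [Fin.reduceAdd, Fin.lt_def, sh_val, Fin.isValue, add_zero] <;>
             rcases E0 with ⟨e0,f0⟩|⟨e0,f0⟩ <;> rcases E1 with ⟨e1,f1⟩|⟨e1,f1⟩ <;>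
             rcases E2 with ⟨e2,f2⟩|⟨e2,f2⟩ <;> rcases E3 with ⟨e3,f3⟩|⟨e3,f3⟩ <;> omega)
        · refine ⟨1, SM4' _ ?_ ?_ ?_⟩ <;>
            (simp only [Fin.reduceAdd, Fin.lt_def, sh_val, Fin.isValue, add_zero, zero_add] <;>
             rcases E0 with ⟨e0,f0⟩|⟨e0,f0⟩ <;> rcases E1 with ⟨e1,f1⟩|⟨e1,f1⟩ <;>
             rcases E2 with ⟨e2,f2⟩|⟨e2,f2⟩ <;> rcases E3 with ⟨e3,f3⟩|⟨e3,f3⟩ <;> omega)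
      · refine ⟨2, SM4' _ ?_ ?_ ?_⟩ <;>
          (simp only [Fin.reduceAdd, Fin.lt_def, sh_val, Fin.isValue, add_zero, zero_add] <;>
           rcases E0 with ⟨e0,f0⟩|⟨e0,f0⟩ <;> rcases E1 with ⟨e1,f1⟩|⟨e1,f1⟩ <;>
           rcases E2 with ⟨e2,f2⟩|⟨e2,f2⟩ <;> rcases E3 with ⟨e3,f3⟩|⟨e3,f3⟩ <;> omega)
    · refine ⟨3, SM4' _ ?_ ?_ ?_⟩ <;>
        (simp only [Fin.reduceAdd, Fin.lt_def, sh_val, Fin.isValue, add_zero, zero_add] <;>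
         rcases E0 with ⟨e0,f0⟩|⟨e0,f0⟩ <;> rcases E1 with ⟨e1,f1⟩|⟨e1,f1⟩ <;>
         rcases E2 with ⟨e2,f2⟩|⟨e2,f2⟩ <;> rcases E3 with ⟨e3,f3⟩|⟨e3,f3⟩ <;> omega)
  · refine ⟨0, SM4' _ ?_ ?_ ?_⟩ <;>
      (simp only [Fin.reduceAdd, Fin.lt_def, sh_val, Fin.isValue, add_zero] <;>
       rcases E0 with ⟨e0,f0⟩|⟨e0,f0⟩ <;> rcases E1 with ⟨e1,f1⟩|⟨e1,f1⟩ <;>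
       rcases E2 with ⟨e2,f2⟩|⟨e2,f2⟩ <;> rcases E3 with ⟨e3,f3⟩|⟨e3,f3⟩ <;> omega)

lemma mono_up {n : ℕ} (b : Fin n → Fin n) (M : Fin n)
    (hstep : ∀ p : Fin n, p.val < M.val → b p ≤ b (fsucc p)) :
    ∀ (d : ℕ) (i j : Fin n), j.val = i.val + d → j.val ≤ M.val → b i ≤ b j := by
  intro d
  induction d with
  | zero => intro i j h _; have : i = j := Fin.ext (by omega); rw [this]
  | succ d ih =>
      intro i j h hjM
      have hjn := j.isLt
      have hMn := M.isLt
      set j' : Fin n := ⟨i.val + d, by omega⟩ with hj'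
      have h1 : b i ≤ b j' := ih i j' rfl (by simp [hj']; omega)
      have h2 : fsucc j' = j := Fin.ext (by
        simp [fsucc, hj', Nat.mod_eq_of_lt (show i.val + d + 1 < n by omega)]; omega)
      have h3 : b j' ≤ b (fsucc j') := hstep j' (by simp [hj']; omega)
      rw [h2] at h3; exact le_trans h1 h3

lemma mono_down {n : ℕ} (b : Fin n → Fin n) (M : Fin n)
    (hstep : ∀ q : Fin n, M.val ≤ q.val → b (fsucc q) ≤ b q) :
    ∀ (d : ℕ) (i j : Fin n), M.val ≤ i.val → j.val = i.val + d → b j ≤ b i := by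
  intro d
  induction d with
  | zero => intro i j _ h; have : i = j := Fin.ext (by omega); rw [this]
  | succ d ih =>
      intro i j hMi h
      have hjn := j.isLt
      set j' : Fin n := ⟨i.val + d, by omega⟩ with hj'
      have h1 : b j' ≤ b i := ih i j' hMi rfl
      have h2 : fsucc j' = j := Fin.ext (by
        simp [fsucc, hj', Nat.mod_eq_of_lt (show i.val + d + 1 < n by omega)]; omega)
      have h3 : b (fsucc j') ≤ b j' := hstep j' (by simp [hj']; omega)
      rw [h2] at h3; exact le_trans h3 h1

lemma card_filter_comp {β : Type*} [Fintype β] [DecidableEq β] (P : β → Prop) [DecidablePred P]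
    (e : β ≃ β) :
    (univ.filter fun i => P (e i)).card = (univ.filter P).card := by
  refine Finset.card_bij' (fun i _ => e i) (fun y _ => e.symm y) ?_ ?_ ?_ ?_ <;> simp

lemma card_filter_sh {n : ℕ} (m : Fin n) (P : Fin n → Prop) [DecidablePred P] :
    (univ.filter fun i : Fin n => P (sh m i.val)).card = (univ.filter P).card := by
  have sheq : ∀ i : Fin n, sh (sh m i.val) (n - m.val) = i := by
    intro i
    have hi := i.isLt
    have hmlt := m.isLt
    apply Fin.ext
    simp only [sh_val, Nat.mod_add_mod]
    rw [show m.val + i.val + (n - m.val) = i.val + n by omega, Nat.add_mod_right,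
      Nat.mod_eq_of_lt hi]
  have sheq2 : ∀ y : Fin n, sh m ((sh y (n - m.val)).val) = y := by
    intro y
    have hy := y.isLt
    have hmlt := m.isLt
    apply Fin.ext
    simp only [sh_val, Nat.add_mod_mod]
    rw [show m.val + (y.val + (n - m.val)) = y.val + n by omega, Nat.add_mod_right,
      Nat.mod_eq_of_lt hy]
  refine Finset.card_bij' (fun i _ => sh m i.val) (fun y _ => sh y (n - m.val)) ?_ ?_ ?_ ?_
  · intro i hi
    exact mem_filter.mpr ⟨mem_univ _, (mem_filter.mp hi).2⟩
  · intro y hy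
    refine mem_filter.mpr ⟨mem_univ _, ?_⟩
    rw [sheq2]
    exact (mem_filter.mp hy).2
  · intro i _
    exact sheq i
  · intro y _
    exact sheq2 y

lemma rot4_card {n : ℕ} (rel : Fin n → Fin n → Prop) [DecidableRel rel]
    (v : Fin 4 → Fin n) (c : Fin 4) :
    (univ.filter fun i : Fin 4 => rel (v (fsucc (i + c))) (v (i + c))).card
      = (univ.filter fun i : Fin 4 => rel (v (fsucc i)) (v i)).card := by
  have := card_filter_comp (fun j : Fin 4 => rel (v (fsucc j)) (v j)) (Equiv.addRight c)
  simp at this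
  convert this using 2
  ext i
  simp only [mem_filter, mem_univ, true_and]
  exact ⟨fun h => mem_filter.mpr ⟨mem_univ _, h⟩, fun h => (mem_filter.mp h).2⟩
lemma main_construction {n : ℕ} (hn : 4 ≤ n) (b : Fin n → Fin n)
    (h0 : ∀ i, b ⟨0, by omega⟩ ≤ b i)
    (hD : 2 ≤ (univ.filter fun i : Fin n => b (fsucc i) < b i).card)
    (hA : 2 ≤ (univ.filter fun i : Fin n => b i < b (fsucc i)).card) :
    ∃ w : Fin 4 → Fin n, StrictMono w ∧
      2 ≤ (univ.filter fun i : Fin 4 => (b ∘ w) (fsucc i) < (b ∘ w) i).card ∧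
      2 ≤ (univ.filter fun i : Fin 4 => (b ∘ w) i < (b ∘ w) (fsucc i)).card := by
  have hn0 : 0 < n := by omega
  set z : Fin n := ⟨0, hn0⟩ with hz
  obtain ⟨M, -, hM'⟩ := Finset.exists_max_image univ b ⟨z, mem_univ z⟩
  have hM : ∀ x, b x ≤ b M := fun x => hM' x (mem_univ x)
  -- a strict descent exists
  have hDex : ∃ i : Fin n, b (fsucc i) < b i := by
    have h1 : 1 < (univ.filter fun i : Fin n => b (fsucc i) < b i).card := by omega
    obtain ⟨i, hi, -, -, -⟩ := Finset.one_lt_card.mp h1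
    exact ⟨i, (mem_filter.mp hi).2⟩
  have hzM : b z < b M := by
    obtain ⟨i, hi⟩ := hDex
    exact lt_of_le_of_lt (h0 (fsucc i)) (lt_of_lt_of_le hi (hM i))
  have hM0 : 0 < M.val := by
    rcases Nat.eq_zero_or_pos M.val with h | h
    · exact absurd (show M = z from Fin.ext h) (fun hh => absurd (hh ▸ hzM) (lt_irrefl _))
    · exact h
  have hMn := M.isLt
  have hzv : z.val = 0 := rfl
  have two_le : ∀ (P : Fin 4 → Prop) [DecidablePred P] (j1 j2 : Fin 4), P j1 → P j2 → j1 ≠ j2 →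
      2 ≤ (univ.filter P).card := by
    intro P _ j1 j2 h1 h2 hne
    have := Finset.one_lt_card.mpr
      ⟨j1, mem_filter.mpr ⟨mem_univ _, h1⟩, j2, mem_filter.mpr ⟨mem_univ _, h2⟩, hne⟩
    omega
  by_cases C1 : ∃ p : Fin n, p.val < M.val ∧ b (fsucc p) < b p
  · obtain ⟨p, hpM, hp⟩ := C1
    have hp0 : 0 < p.val := by
      rcases Nat.eq_zero_or_pos p.val with h | h
      · exact absurd ((Fin.ext h : p = z) ▸ hp) (not_lt.mpr (h0 _))
      · exact h
    have hpn : p.val + 1 < n := by omega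
    have hfp : (fsucc p).val = p.val + 1 := by simp [fsucc, Nat.mod_eq_of_lt hpn]
    have h2 : b (fsucc p) < b M := lt_of_lt_of_le hp (hM p)
    have hfpM : (fsucc p).val < M.val := by
      have h1 : fsucc p ≠ M := fun h => absurd (h ▸ h2) (lt_irrefl _)
      have h3 : (fsucc p).val ≠ M.val := fun h => h1 (Fin.ext h)
      omega
    refine ⟨quad z p (fsucc p) M, SM4' _ ?_ ?_ ?_, ?_, ?_⟩
    · simp only [quad0, quad1, Fin.lt_def, hzv]; omega
    · simp only [quad1, quad2, Fin.lt_def]; omega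
    · simp only [quad2, quad3, Fin.lt_def]; omega
    · refine two_le _ 1 3 ?_ ?_ (by decide)
      · show (b ∘ quad z p (fsucc p) M) (fsucc 1) < (b ∘ quad z p (fsucc p) M) 1
        rw [fsucc4_1]; simpa using hp
      · show (b ∘ quad z p (fsucc p) M) (fsucc 3) < (b ∘ quad z p (fsucc p) M) 3
        rw [fsucc4_3]; simpa using hzM
    · refine two_le _ 0 2 ?_ ?_ (by decide)
      · show (b ∘ quad z p (fsucc p) M) 0 < (b ∘ quad z p (fsucc p) M) (fsucc 0)
        rw [fsucc4_0]; simpa using lt_of_le_of_lt (h0 (fsucc p)) hp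
      · show (b ∘ quad z p (fsucc p) M) 2 < (b ∘ quad z p (fsucc p) M) (fsucc 2)
        rw [fsucc4_2]; simpa using h2
  · by_cases C2 : ∃ q : Fin n, M.val ≤ q.val ∧ b q < b (fsucc q)
    · obtain ⟨q, hMq, hq⟩ := C2
      have h2 : b q < b M := lt_of_lt_of_le hq (hM (fsucc q))
      have hqM : M.val < q.val := by
        have h1 : q ≠ M := fun h => absurd (h ▸ h2) (lt_irrefl _)
        have h3 : q.val ≠ M.val := fun h => h1 (Fin.ext h)
        omega
      have hq1n : q.val + 1 < n := by
        by_contra hcc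
        have hqn := q.isLt
        have he : fsucc q = z := Fin.ext (by simp [fsucc, hzv, show q.val + 1 = n by omega])
        rw [he] at hq
        exact absurd hq (not_lt.mpr (h0 q))
      have hfq : (fsucc q).val = q.val + 1 := by simp [fsucc, Nat.mod_eq_of_lt hq1n]
      refine ⟨quad z M q (fsucc q), SM4' _ ?_ ?_ ?_, ?_, ?_⟩
      · simp only [quad0, quad1, Fin.lt_def, hzv]; omega
      · simp only [quad1, quad2, Fin.lt_def]; omega
      · simp only [quad2, quad3, Fin.lt_def]; omega
      · refine two_le _ 1 3 ?_ ?_ (by decide)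
        · show (b ∘ quad z M q (fsucc q)) (fsucc 1) < (b ∘ quad z M q (fsucc q)) 1
          rw [fsucc4_1]; simpa using h2
        · show (b ∘ quad z M q (fsucc q)) (fsucc 3) < (b ∘ quad z M q (fsucc q)) 3
          rw [fsucc4_3]; simpa using lt_of_le_of_lt (h0 q) hq
      · refine two_le _ 0 2 ?_ ?_ (by decide)
        · show (b ∘ quad z M q (fsucc q)) 0 < (b ∘ quad z M q (fsucc q)) (fsucc 0)
          rw [fsucc4_0]; simpa using hzM
        · show (b ∘ quad z M q (fsucc q)) 2 < (b ∘ quad z M q (fsucc q)) (fsucc 2)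
          rw [fsucc4_2]; simpa using hq
    · push_neg at C1 C2
      have hup : ∀ p : Fin n, p.val < M.val → b p ≤ b (fsucc p) := fun p h => C1 p h
      have hdown : ∀ q : Fin n, M.val ≤ q.val → b (fsucc q) ≤ b q := fun q h => C2 q h
      have mu : ∀ i j : Fin n, i.val ≤ j.val → j.val ≤ M.val → b i ≤ b j :=
        fun i j h1 h2 => mono_up b M hup (j.val - i.val) i j (by omega) h2
      have md : ∀ i j : Fin n, M.val ≤ i.val → i.val ≤ j.val → b j ≤ b i :=
        fun i j h1 h2 => mono_down b M hdown (j.val - i.val) i j h1 (by omega)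
      have key_up : ∃ x : Fin n, 0 < x.val ∧ x.val < M.val ∧ b z < b x ∧ b x < b M := by
        have inner : ∀ s₁ s₂ : Fin n, b s₁ < b (fsucc s₁) → b s₂ < b (fsucc s₂) →
            s₁.val < s₂.val → s₂.val < M.val →
            ∃ x : Fin n, 0 < x.val ∧ x.val < M.val ∧ b z < b x ∧ b x < b M := by
          intro s₁ s₂ a1 a2 h12 h2M
          have hf1 : (fsucc s₁).val = s₁.val + 1 := by
            simp [fsucc, Nat.mod_eq_of_lt (show s₁.val + 1 < n by omega)]
          have hf2 : (fsucc s₂).val = s₂.val + 1 := by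
            simp [fsucc, Nat.mod_eq_of_lt (show s₂.val + 1 < n by omega)]
          have e1 : b (fsucc s₁) ≤ b s₂ := mu (fsucc s₁) s₂ (by omega) (by omega)
          have e2 : b (fsucc s₂) ≤ b M := mu (fsucc s₂) M (by omega) (le_refl _)
          have hzx : b z < b s₂ := lt_of_le_of_lt (h0 s₁) (lt_of_lt_of_le a1 e1)
          have hxM : b s₂ < b M := lt_of_lt_of_le a2 e2
          have hx0 : 0 < s₂.val := by
            rcases Nat.eq_zero_or_pos s₂.val with h | h
            · exact absurd ((Fin.ext h : s₂ = z) ▸ hzx) (lt_irrefl _)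
            · exact h
          exact ⟨s₂, hx0, h2M, hzx, hxM⟩
        have h1 : 1 < (univ.filter fun i : Fin n => b i < b (fsucc i)).card := by omega
        obtain ⟨s, hs, s', hs', hne⟩ := Finset.one_lt_card.mp h1
        have has := (mem_filter.mp hs).2
        have has' := (mem_filter.mp hs').2
        have hsM : s.val < M.val := by
          by_contra hc
          exact absurd has (not_lt.mpr (hdown s (by omega)))
        have hsM' : s'.val < M.val := by
          by_contra hc
          exact absurd has' (not_lt.mpr (hdown s' (by omega)))
        have hvne : s.val ≠ s'.val := fun h => hne (Fin.ext h)
        rcases lt_or_gt_of_ne hvne with h | h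
        · exact inner s s' has has' h hsM'
        · exact inner s' s has' has h hsM
      have key_down : ∃ y : Fin n, M.val < y.val ∧ b z < b y ∧ b y < b M := by
        have inner : ∀ r₁ r₂ : Fin n, b (fsucc r₁) < b r₁ → b (fsucc r₂) < b r₂ →
            M.val ≤ r₁.val → r₁.val < r₂.val →
            ∃ y : Fin n, M.val < y.val ∧ b z < b y ∧ b y < b M := by
          intro r₁ r₂ d1 d2 hMr h12
          have hr2n := r₂.isLt
          have hf1 : (fsucc r₁).val = r₁.val + 1 := by
            simp [fsucc, Nat.mod_eq_of_lt (show r₁.val + 1 < n by omega)]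
          have e1 : b r₂ ≤ b (fsucc r₁) := md (fsucc r₁) r₂ (by omega) (by omega)
          have hyM : b r₂ < b M := lt_of_le_of_lt e1 (lt_of_lt_of_le d1 (hM r₁))
          have hzy : b z < b r₂ := lt_of_le_of_lt (h0 (fsucc r₂)) d2
          exact ⟨r₂, by omega, hzy, hyM⟩
        have h1 : 1 < (univ.filter fun i : Fin n => b (fsucc i) < b i).card := by omega
        obtain ⟨r, hr, r', hr', hne⟩ := Finset.one_lt_card.mp h1
        have hdr := (mem_filter.mp hr).2
        have hdr' := (mem_filter.mp hr').2
        have hrM : M.val ≤ r.val := by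
          by_contra hc
          exact absurd hdr (not_lt.mpr (hup r (by omega)))
        have hrM' : M.val ≤ r'.val := by
          by_contra hc
          exact absurd hdr' (not_lt.mpr (hup r' (by omega)))
        have hvne : r.val ≠ r'.val := fun h => hne (Fin.ext h)
        rcases lt_or_gt_of_ne hvne with h | h
        · exact inner r r' hdr hdr' hrM h
        · exact inner r' r hdr' hdr hrM' h
      obtain ⟨x, hx0, hxM, hzx, hxMv⟩ := key_up
      obtain ⟨y, hMy, hzy, hyM⟩ := key_down
      refine ⟨quad z x M y, SM4' _ ?_ ?_ ?_, ?_, ?_⟩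
      · simp only [quad0, quad1, Fin.lt_def, hzv]; omega
      · simp only [quad1, quad2, Fin.lt_def]; omega
      · simp only [quad2, quad3, Fin.lt_def]; omega
      · refine two_le _ 2 3 ?_ ?_ (by decide)
        · show (b ∘ quad z x M y) (fsucc 2) < (b ∘ quad z x M y) 2
          rw [fsucc4_2]; simpa using hyM
        · show (b ∘ quad z x M y) (fsucc 3) < (b ∘ quad z x M y) 3
          rw [fsucc4_3]; simpa using hzy
      · refine two_le _ 0 1 ?_ ?_ (by decide)
        · show (b ∘ quad z x M y) 0 < (b ∘ quad z x M y) (fsucc 0)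
          rw [fsucc4_0]; simpa using hzx
        · show (b ∘ quad z x M y) 1 < (b ∘ quad z x M y) (fsucc 1)
          rw [fsucc4_1]; simpa using hxMv

end OrientedAux

open OrientedAux Finset in
/-- A full transformation is oriented iff each of its restrictions
to a four-element subset (enumerated increasingly) is oriented. -/
theorem oriented_iff_restrictions_width_four {n : ℕ} (α : Fin n → Fin n) :
    IsOrientedSeq α ↔
      ∀ u : Fin 4 → Fin n, StrictMono u → IsOrientedSeq (α ∘ u) := by
  constructor
  · rintro (h | h) u hu
    · exact Or.inl (restrict_card_le_one (fun c b => c < b)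
        (fun hcb hdb => lt_of_lt_of_le hcb (le_of_not_gt hdb)) (fun b => lt_irrefl b) α h u hu)
    · exact Or.inr (restrict_card_le_one (fun c b => b < c)
        (fun hcb hdb => lt_of_le_of_lt (le_of_not_gt hdb) hcb) (fun b => lt_irrefl b) α h u hu)
  · intro H
    by_contra hcon
    rw [IsOrientedSeq, not_or] at hcon
    obtain ⟨hc, ha⟩ := hcon
    have hc' : ¬ (univ.filter fun i : Fin n => α (fsucc i) < α i).card ≤ 1 := hc
    have ha' : ¬ (univ.filter fun i : Fin n => α i < α (fsucc i)).card ≤ 1 := ha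
    have hD : 2 ≤ (univ.filter fun i : Fin n => α (fsucc i) < α i).card := by omega
    have hA : 2 ≤ (univ.filter fun i : Fin n => α i < α (fsucc i)).card := by omega
    have hdisj : Disjoint (univ.filter fun i : Fin n => α (fsucc i) < α i)
        (univ.filter fun i : Fin n => α i < α (fsucc i)) := by
      rw [Finset.disjoint_left]
      intro i hi hi'
      exact absurd ((mem_filter.mp hi').2) (not_lt.mpr (le_of_lt (mem_filter.mp hi).2))
    have hcardun : ((univ.filter fun i : Fin n => α (fsucc i) < α i)
        ∪ (univ.filter fun i : Fin n => α i < α (fsucc i))).card ≤ n := by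
      calc ((univ.filter fun i : Fin n => α (fsucc i) < α i)
          ∪ (univ.filter fun i : Fin n => α i < α (fsucc i))).card
          ≤ (univ : Finset (Fin n)).card := card_le_card (subset_univ _)
        _ = n := by simp
    rw [card_union_of_disjoint hdisj] at hcardun
    have hn4 : 4 ≤ n := by omega
    have hne0 : (univ : Finset (Fin n)).Nonempty := ⟨⟨0, by omega⟩, mem_univ _⟩
    obtain ⟨m, -, hm'⟩ := Finset.exists_min_image univ α hne0
    have hm : ∀ x, α m ≤ α x := fun x => hm' x (mem_univ x)
    have hmlt := m.isLt
    set b : Fin n → Fin n := fun i => α (sh m i.val) with hb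
    have hDb : 2 ≤ (univ.filter fun i : Fin n => b (fsucc i) < b i).card := by
      have e : (univ.filter fun i : Fin n => b (fsucc i) < b i)
          = univ.filter fun i : Fin n => (fun x => α (fsucc x) < α x) (sh m i.val) := by
        apply filter_congr
        intro i _
        simp only [hb, sh_fsucc_comm]
      rw [e, card_filter_sh m (fun x => α (fsucc x) < α x)]
      exact hD
    have hAb : 2 ≤ (univ.filter fun i : Fin n => b i < b (fsucc i)).card := by
      have e : (univ.filter fun i : Fin n => b i < b (fsucc i))
          = univ.filter fun i : Fin n => (fun x => α x < α (fsucc x)) (sh m i.val) := by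
        apply filter_congr
        intro i _
        simp only [hb, sh_fsucc_comm]
      rw [e, card_filter_sh m (fun x => α x < α (fsucc x))]
      exact hA
    have hmin : ∀ i : Fin n, b ⟨0, by omega⟩ ≤ b i := by
      intro i
      show α (sh m (0 : ℕ)) ≤ α (sh m i.val)
      rw [sh_zero]
      exact hm _
    obtain ⟨w, hw, h2d, h2a⟩ := main_construction hn4 b hmin hDb hAb
    obtain ⟨c, hcmono⟩ := exists_rot_strictMono w hw m
    have hor := H _ hcmono
    have ed : ∀ i : Fin 4,
        (α ∘ fun j : Fin 4 => sh m (w (j + c)).val) (fsucc i) = (b ∘ w) (fsucc (i + c)) := by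
      intro i
      show α (sh m (w (fsucc i + c)).val) = b (w (fsucc (i + c)))
      rw [fsucc_add4 i c]
    rcases hor with h1 | h1
    · have h1' : (univ.filter fun i : Fin 4 =>
          (α ∘ fun j : Fin 4 => sh m (w (j + c)).val) (fsucc i)
            < (α ∘ fun j : Fin 4 => sh m (w (j + c)).val) i).card ≤ 1 := h1
      have e : (univ.filter fun i : Fin 4 =>
          (α ∘ fun j : Fin 4 => sh m (w (j + c)).val) (fsucc i)
            < (α ∘ fun j : Fin 4 => sh m (w (j + c)).val) i)
          = univ.filter fun i : Fin 4 => (b ∘ w) (fsucc (i + c)) < (b ∘ w) (i + c) := by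
        apply filter_congr
        intro i _
        rw [ed i]
        exact Iff.rfl
      rw [e, rot4_card (fun x y => x < y) (b ∘ w) c] at h1'
      omega
    · have h1' : (univ.filter fun i : Fin 4 =>
          (α ∘ fun j : Fin 4 => sh m (w (j + c)).val) i
            < (α ∘ fun j : Fin 4 => sh m (w (j + c)).val) (fsucc i)).card ≤ 1 := h1
      have e : (univ.filter fun i : Fin 4 =>
          (α ∘ fun j : Fin 4 => sh m (w (j + c)).val) i
            < (α ∘ fun j : Fin 4 => sh m (w (j + c)).val) (fsucc i))
          = univ.filter fun i : Fin 4 => (b ∘ w) (i + c) < (b ∘ w) (fsucc (i + c)) := by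
        apply filter_congr
        intro i _
        rw [ed i]
        exact Iff.rfl
      rw [e, rot4_card (fun x y => y < x) (b ∘ w) c] at h1'
      omega
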